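/- For n ≥ 1, define G_n = Π_{k=1}^{⌊log₂ n⌋} Π_{i=1}^{⌊n/2^k⌋} (1+q^i) ∈ ℤ[q]. Then G_n = Π_{m=1}^{n} Φ_{2m}(q)^{⌊n/(2m)⌋}, where Φ_k is the k-th cyclotomic polynomial. -/

import Mathlib

open Polynomial

section Aux
open Finset

lemma tel (a : ℕ → ℕ) (ha : ∀ k, a (k+1) ≤ a k) (K : ℕ) :
    ∑ k ∈ Finset.Icc 1 K, (a k - a (k+1)) = a 1 - a (K+1) := by
  have hmono : ∀ j k : ℕ, j ≤ k → a k ≤ a j := by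
    intro j k hjk
    induction k with
    | zero => have hj0 : j = 0 := by omega
              simp [hj0]
    | succ k ihk =>
      rcases Nat.lt_or_ge j (k+1) with h | h
      · exact le_trans (ha k) (ihk (by omega))
      · have : j = k + 1 := by omega
        simp [this]
  induction K with
  | zero => simp
  | succ K ih =>
    rw [Finset.sum_Icc_succ_top (by omega : 1 ≤ K + 1), ih]
    have h1 : a (K+1) ≤ a 1 := hmono 1 (K+1) (by omega)
    have h2 := ha (K+1)
    omega

lemma countlem (N m : ℕ) (hm : 1 ≤ m) :
    ((Finset.Icc 1 N).filter (fun i => m ∣ i ∧ Odd (i / m))).card = N / m - N / (2 * m) := by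
  have hfe : (Finset.Icc 1 N).filter (fun i => m ∣ i ∧ Odd (i / m))
      = (Finset.Icc 1 N).filter (fun i => m ∣ i) \ (Finset.Icc 1 N).filter (fun i => 2 * m ∣ i) := by
    ext i
    simp only [Finset.mem_filter, Finset.mem_sdiff, Finset.mem_Icc]
    constructor
    · rintro ⟨hi, hmi, hodd⟩
      refine ⟨⟨hi, hmi⟩, ?_⟩
      rintro ⟨-, s, rfl⟩
      rw [show 2 * m * s = m * (2 * s) by ring, Nat.mul_div_cancel_left _ (by omega : 0 < m)] at hodd
      rw [Nat.odd_iff] at hodd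
      omega
    · rintro ⟨⟨hi, hmi⟩, hne⟩
      refine ⟨hi, hmi, ?_⟩
      obtain ⟨q, rfl⟩ := hmi
      rw [Nat.mul_div_cancel_left _ (by omega : 0 < m)]
      rcases Nat.even_or_odd q with he | ho
      · exfalso
        obtain ⟨t, rfl⟩ := he
        exact hne ⟨hi, ⟨t, by ring⟩⟩
      · exact ho
  rw [hfe, Finset.card_sdiff_of_subset]
  · have h1 : Finset.Icc 1 N = Finset.Ioc 0 N := rfl
    rw [h1, Nat.Ioc_filter_dvd_card_eq_div, Nat.Ioc_filter_dvd_card_eq_div]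
  · apply Finset.monotone_filter_right
    intro i _ h2
    exact dvd_trans ⟨2, by ring⟩ h2

lemma sdiffEq (i : ℕ) (hi : 1 ≤ i) :
    (2*i).divisors \ i.divisors
      = (i.divisors.filter (fun m => Odd (i/m))).image (fun m => 2 * m) := by
  ext d
  simp only [Finset.mem_sdiff, Nat.mem_divisors, Finset.mem_image, Finset.mem_filter]
  constructor
  · rintro ⟨⟨hd2i, -⟩, hdn⟩
    have hdi : ¬ d ∣ i := fun h => hdn ⟨h, by omega⟩
    have heven : 2 ∣ d := by
      by_contra h
      have hcop : Nat.Coprime d 2 := Nat.coprime_two_right.mpr (Nat.odd_iff.mpr (by omega))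
      exact hdi (hcop.dvd_of_dvd_mul_left hd2i)
    obtain ⟨m, rfl⟩ := heven
    have hm : m ≠ 0 := by
      rintro rfl
      simp at hd2i
      omega
    have hmi : m ∣ i := (mul_dvd_mul_iff_left (two_ne_zero)).mp hd2i
    refine ⟨m, ⟨⟨hmi, by omega⟩, ?_⟩, rfl⟩
    obtain ⟨q, rfl⟩ := hmi
    rw [Nat.mul_div_cancel_left _ (by omega : 0 < m)]
    rcases Nat.even_or_odd q with he | ho
    · exfalso
      obtain ⟨t, rfl⟩ := he
      exact hdi ⟨t, by ring⟩
    · exact ho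
  · rintro ⟨m, ⟨⟨hmi, -⟩, hodd⟩, rfl⟩
    have hm : m ≠ 0 := by
      rintro rfl
      rcases hmi with ⟨s, rfl⟩
      omega
    refine ⟨⟨mul_dvd_mul_left 2 hmi, by omega⟩, ?_⟩
    rintro ⟨⟨s, rfl⟩, -⟩
    rw [show 2 * m * s = m * (2 * s) by ring, Nat.mul_div_cancel_left _ (by omega : 0 < m)] at hodd
    rw [Nat.odd_iff] at hodd
    omega

lemma key (i : ℕ) (hi : 1 ≤ i) :
    (1 + X ^ i : Polynomial ℤ)
      = ∏ m ∈ i.divisors.filter (fun m => Odd (i/m)), cyclotomic (2 * m) ℤ := by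
  have hsub : i.divisors ⊆ (2*i).divisors :=
    Nat.divisors_subset_of_dvd (by omega) ⟨2, by ring⟩
  have hXi : (X ^ i - 1 : Polynomial ℤ) ≠ 0 := by
    have hm : ((X : Polynomial ℤ) ^ i - 1).Monic := by
      simpa using monic_X_pow_sub_C (1 : ℤ) (by omega : i ≠ 0)
    exact hm.ne_zero
  apply mul_left_cancel₀ hXi
  have h2 : (X ^ i - 1 : Polynomial ℤ) * (1 + X ^ i) = X ^ (2*i) - 1 := by
    have : (X : Polynomial ℤ) ^ (2*i) = X ^ i * X ^ i := by
      rw [two_mul, pow_add]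
    rw [this]; ring
  rw [h2, ← prod_cyclotomic_eq_X_pow_sub_one (by omega : 0 < 2*i) ℤ,
    ← Finset.prod_sdiff hsub, sdiffEq i hi,
    Finset.prod_image (fun a _ b _ h => by omega),
    prod_cyclotomic_eq_X_pow_sub_one (by omega : 0 < i) ℤ, mul_comm]

end Aux

/-- `G_n = Π_{k=1}^{⌊log₂ n⌋} Π_{i=1}^{⌊n/2^k⌋} (1+q^i)` -/
noncomputable def Gpoly (n : ℕ) : Polynomial ℤ :=
  ∏ k ∈ Finset.Icc 1 (Nat.log 2 n), ∏ i ∈ Finset.Icc 1 (n / 2 ^ k), (1 + Polynomial.X ^ i)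

/-- `G_n = Π_{m=1}^{n} Φ_{2m}(q)^{⌊n/(2m)⌋}`. -/
theorem stmt10 (n : ℕ) (hn : 1 ≤ n) :
    Gpoly n = ∏ m ∈ Finset.Icc 1 n, (Polynomial.cyclotomic (2 * m) ℤ) ^ (n / (2 * m)) := by
  unfold Gpoly
  have step1 : ∀ k, 1 ≤ k →
      ∏ i ∈ Finset.Icc 1 (n / 2 ^ k), (1 + (X : Polynomial ℤ) ^ i)
        = ∏ m ∈ Finset.Icc 1 n, cyclotomic (2*m) ℤ ^
            ((Finset.Icc 1 (n / 2 ^ k)).filter (fun i => m ∣ i ∧ Odd (i/m))).card := by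
    intro k hk
    have hN : n / 2 ^ k ≤ n := Nat.div_le_self _ _
    calc ∏ i ∈ Finset.Icc 1 (n / 2 ^ k), (1 + (X : Polynomial ℤ) ^ i)
        = ∏ i ∈ Finset.Icc 1 (n / 2 ^ k),
            ∏ m ∈ i.divisors.filter (fun m => Odd (i/m)), cyclotomic (2*m) ℤ :=
          Finset.prod_congr rfl (fun i hi => key i (Finset.mem_Icc.mp hi).1)
      _ = ∏ m ∈ Finset.Icc 1 n,
            ∏ _i ∈ (Finset.Icc 1 (n / 2 ^ k)).filter (fun i => m ∣ i ∧ Odd (i/m)),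
              cyclotomic (2*m) ℤ := by
          apply Finset.prod_comm'
          intro i m
          simp only [Finset.mem_Icc, Finset.mem_filter, Nat.mem_divisors]
          constructor
          · rintro ⟨⟨hi1, hi2⟩, ⟨hmi, hine⟩, hodd⟩
            have hm1 : 1 ≤ m := by
              rcases Nat.eq_zero_or_pos m with rfl | h
              · rcases hmi with ⟨s, rfl⟩; omega
              · exact h
            exact ⟨⟨⟨hi1, hi2⟩, hmi, hodd⟩, hm1, le_trans (Nat.le_of_dvd (by omega) hmi) (le_trans hi2 hN)⟩
          · rintro ⟨⟨⟨hi1, hi2⟩, hmi, hodd⟩, -, -⟩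
            exact ⟨⟨hi1, hi2⟩, ⟨hmi, by omega⟩, hodd⟩
      _ = ∏ m ∈ Finset.Icc 1 n, cyclotomic (2*m) ℤ ^
            ((Finset.Icc 1 (n / 2 ^ k)).filter (fun i => m ∣ i ∧ Odd (i/m))).card :=
          Finset.prod_congr rfl (fun m _ => Finset.prod_const _)
  rw [Finset.prod_congr rfl (fun k hk => step1 k (Finset.mem_Icc.mp hk).1), Finset.prod_comm]
  refine Finset.prod_congr rfl (fun m hm => ?_)
  rw [Finset.prod_pow_eq_pow_sum]
  congr 1
  obtain ⟨hm1, hmn⟩ := Finset.mem_Icc.mp hm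
  have hcard : ∀ k ∈ Finset.Icc 1 (Nat.log 2 n),
      ((Finset.Icc 1 (n / 2 ^ k)).filter (fun i => m ∣ i ∧ Odd (i/m))).card
        = (n / 2 ^ k / m) - (n / 2 ^ (k+1) / m) := by
    intro k _
    rw [countlem _ _ hm1]
    congr 1
    rw [Nat.div_div_eq_div_mul, Nat.div_div_eq_div_mul, pow_succ]
    ring_nf
  rw [Finset.sum_congr rfl hcard, tel (fun k => n / 2 ^ k / m)]
  · have h0 : n / 2 ^ (Nat.log 2 n + 1) = 0 :=
      Nat.div_eq_of_lt (Nat.lt_pow_succ_log_self (by norm_num) n)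
    simp only [h0, Nat.zero_div, Nat.sub_zero, pow_one]
    rw [Nat.div_div_eq_div_mul]
  · intro k
    apply Nat.div_le_div_right
    rw [pow_succ, ← Nat.div_div_eq_div_mul]
    exact Nat.div_le_self _ _
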